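/- For c ∈ (0,1) set x̲(c) = √((1 − √(1 − c²))/2), x̄(c) = √((1 + √(1 − c²))/2), and T(c) = 2·∫_{x̲(c)}^{x̄(c)} c/( x·√(1 − x²)·√(4x²(1 − x²) − c²) ) dx. Then for every c ∈ (0,1) the function x ↦ c/( x·√(1 − x²)·√(4x²(1 − x²) − c²) ) is integrable on the open interval (x̲(c), x̄(c)), and T(c) tends to √2·π as c tends to 1 from the left. -/

import Mathlib

open MeasureTheory Real Set Filter

set_option maxHeartbeats 1600000

lemma key_est (c : ℝ) (hc0 : 0 < c) (hc1 : c < 1) :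
    IntegrableOn
        (fun x : ℝ => c / (x * Real.sqrt (1 - x ^ 2)
          * Real.sqrt (4 * x ^ 2 * (1 - x ^ 2) - c ^ 2)))
        (Set.Ioo (Real.sqrt ((1 - Real.sqrt (1 - c ^ 2)) / 2))
          (Real.sqrt ((1 + Real.sqrt (1 - c ^ 2)) / 2))) ∧
      c / (((1 + Real.sqrt (1 - c ^ 2)) / 2) * Real.sqrt ((1 + Real.sqrt (1 - c ^ 2)) / 2))
          * (Real.pi / 4)
        ≤ (∫ x in Set.Ioo (Real.sqrt ((1 - Real.sqrt (1 - c ^ 2)) / 2))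
            (Real.sqrt ((1 + Real.sqrt (1 - c ^ 2)) / 2)),
            c / (x * Real.sqrt (1 - x ^ 2) * Real.sqrt (4 * x ^ 2 * (1 - x ^ 2) - c ^ 2))) ∧
      (∫ x in Set.Ioo (Real.sqrt ((1 - Real.sqrt (1 - c ^ 2)) / 2))
            (Real.sqrt ((1 + Real.sqrt (1 - c ^ 2)) / 2)),
            c / (x * Real.sqrt (1 - x ^ 2) * Real.sqrt (4 * x ^ 2 * (1 - x ^ 2) - c ^ 2)))
        ≤ c / (((1 - Real.sqrt (1 - c ^ 2)) / 2) * Real.sqrt ((1 - Real.sqrt (1 - c ^ 2)) / 2))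
          * (Real.pi / 4) := by
  set k : ℝ := Real.sqrt (1 - c ^ 2) with hk
  have hk2 : k ^ 2 = 1 - c ^ 2 := Real.sq_sqrt (by nlinarith)
  have hk0 : 0 < k := Real.sqrt_pos.mpr (by nlinarith)
  have hk1 : k < 1 := by nlinarith [hk2, hk0]
  set sm : ℝ := (1 - k) / 2 with hsm
  set sp : ℝ := (1 + k) / 2 with hsp
  have hsm0 : 0 < sm := by simp only [hsm]; linarith
  have hsp1 : sp < 1 := by simp only [hsp]; linarith
  have hsmsp : sm < sp := by simp only [hsm, hsp]; linarith
  set a : ℝ := Real.sqrt sm with ha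
  set b : ℝ := Real.sqrt sp with hb
  have ha0 : 0 < a := Real.sqrt_pos.mpr hsm0
  have hab : a < b := Real.sqrt_lt_sqrt hsm0.le hsmsp
  have ha2 : a ^ 2 = sm := Real.sq_sqrt hsm0.le
  have hb2 : b ^ 2 = sp := Real.sq_sqrt (by linarith)
  -- facts about x in the interval
  have hxfacts : ∀ x ∈ Set.Ioo a b, 0 < x ∧ sm < x ^ 2 ∧ x ^ 2 < sp ∧
      0 < 4 * x ^ 2 * (1 - x ^ 2) - c ^ 2 := by
    intro x hx
    have hx0 : 0 < x := ha0.trans hx.1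
    have h1 : sm < x ^ 2 := by
      have := pow_lt_pow_left₀ hx.1 ha0.le (n := 2) two_ne_zero
      rwa [ha2] at this
    have h2 : x ^ 2 < sp := by
      have := pow_lt_pow_left₀ hx.2 hx0.le (n := 2) two_ne_zero
      rwa [hb2] at this
    refine ⟨hx0, h1, h2, ?_⟩
    have hu : (2 * x ^ 2 - 1) ^ 2 < k ^ 2 := by
      apply sq_lt_sq' <;> simp only [hsm, hsp] at h1 h2 <;> linarith
    nlinarith [hk2]
  -- the antiderivative
  set F : ℝ → ℝ := fun y => Real.arcsin ((2 * y ^ 2 - 1) / k) / 4 with hF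
  have hFderiv : ∀ x ∈ Set.Ioo a b,
      HasDerivAt F (x / Real.sqrt (4 * x ^ 2 * (1 - x ^ 2) - c ^ 2)) x := by
    intro x hx
    obtain ⟨hx0, h1, h2, hR⟩ := hxfacts x hx
    have hin : HasDerivAt (fun y : ℝ => (2 * y ^ 2 - 1) / k) (4 * x / k) x := by
      have h : HasDerivAt (fun y : ℝ => 2 * y ^ 2 - 1) (4 * x) x := by
        have := ((hasDerivAt_pow 2 x).const_mul 2).sub_const 1
        refine this.congr_deriv ?_
        simp; ring
      exact h.div_const k
    have hum : -1 < (2 * x ^ 2 - 1) / k := by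
      rw [lt_div_iff₀ hk0]
      simp only [hsm] at h1; linarith
    have hup : (2 * x ^ 2 - 1) / k < 1 := by
      rw [div_lt_one hk0]
      simp only [hsp] at h2; linarith
    have harc := Real.hasDerivAt_arcsin (ne_of_gt hum) (ne_of_lt hup)
    have hcomp := (harc.comp x hin).div_const 4
    refine hcomp.congr_deriv ?_
    have h1u : 1 - ((2 * x ^ 2 - 1) / k) ^ 2 = (4 * x ^ 2 * (1 - x ^ 2) - c ^ 2) / k ^ 2 := by
      field_simp
      linear_combination hk2
    rw [h1u, Real.sqrt_div hR.le, Real.sqrt_sq hk0.le]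
    have hRs : 0 < Real.sqrt (4 * x ^ 2 * (1 - x ^ 2) - c ^ 2) := Real.sqrt_pos.mpr hR
    field_simp
  have hFcont : ContinuousOn F (Set.Icc a b) := by
    have : Continuous fun y : ℝ => (2 * y ^ 2 - 1) / k :=
      ((continuous_const.mul (continuous_pow 2)).sub continuous_const).div_const k
    exact ((Real.continuous_arcsin.comp this).div_const 4).continuousOn
  set g : ℝ → ℝ := fun x => x / Real.sqrt (4 * x ^ 2 * (1 - x ^ 2) - c ^ 2) with hg
  have hgnonneg : ∀ x ∈ Set.Ioo a b, 0 ≤ g x := fun x hx =>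
    div_nonneg ((hxfacts x hx).1).le (Real.sqrt_nonneg _)
  have hgInt : IntegrableOn g (Set.Ioc a b) :=
    intervalIntegral.integrableOn_deriv_of_nonneg hFcont hFderiv hgnonneg
  have hgIntOo : IntegrableOn g (Set.Ioo a b) := hgInt.mono_set Set.Ioo_subset_Ioc_self
  have hgIi : IntervalIntegrable g volume a b := by
    rw [intervalIntegrable_iff, Set.uIoc_of_le hab.le]; exact hgInt
  have hgval : (∫ x in Set.Ioo a b, g x) = Real.pi / 4 := by
    have hFTC := intervalIntegral.integral_eq_sub_of_hasDeriv_right_of_le hab.le hFcont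
      (fun x hx => (hFderiv x hx).hasDerivWithinAt) hgIi
    rw [intervalIntegral.integral_of_le hab.le, MeasureTheory.integral_Ioc_eq_integral_Ioo] at hFTC
    rw [hFTC]
    have hFb : F b = Real.pi / 2 / 4 := by
      simp only [hF, hb2]
      rw [show (2 * sp - 1) / k = 1 by field_simp [hsp]; linarith, Real.arcsin_one]
    have hFa : F a = -(Real.pi / 2) / 4 := by
      simp only [hF, ha2]
      rw [show (2 * sm - 1) / k = -1 by field_simp [hsm]; linarith, Real.arcsin_neg_one]
    rw [hFb, hFa]; ring
  set f : ℝ → ℝ := fun x => c / (x * Real.sqrt (1 - x ^ 2)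
    * Real.sqrt (4 * x ^ 2 * (1 - x ^ 2) - c ^ 2)) with hf
  have hfm : Measurable f := by fun_prop
  have hsum : sm + sp = 1 := by simp only [hsm, hsp]; ring
  have hbounds : ∀ x ∈ Set.Ioo a b,
      c / (sp * b) * g x ≤ f x ∧ f x ≤ c / (sm * a) * g x := by
    intro x hx
    obtain ⟨hx0, h1, h2, hR⟩ := hxfacts x hx
    have hS0 : 0 < 1 - x ^ 2 := by linarith
    have hR0 : 0 < Real.sqrt (4 * x ^ 2 * (1 - x ^ 2) - c ^ 2) := Real.sqrt_pos.mpr hR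
    have hSl : a ≤ Real.sqrt (1 - x ^ 2) := Real.sqrt_le_sqrt (by linarith)
    have hSh : Real.sqrt (1 - x ^ 2) ≤ b := Real.sqrt_le_sqrt (by linarith)
    have hSpos : 0 < Real.sqrt (1 - x ^ 2) := Real.sqrt_pos.mpr hS0
    have hle1 : sm * a ≤ x ^ 2 * Real.sqrt (1 - x ^ 2) :=
      mul_le_mul h1.le hSl ha0.le (by positivity)
    have hle2 : x ^ 2 * Real.sqrt (1 - x ^ 2) ≤ sp * b :=
      mul_le_mul h2.le hSh hSpos.le (by positivity)
    have hDen : 0 < x * Real.sqrt (1 - x ^ 2)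
        * Real.sqrt (4 * x ^ 2 * (1 - x ^ 2) - c ^ 2) := by positivity
    have hA0 : 0 < sm * a := by positivity
    have hB0 : 0 < sp * b := by positivity
    constructor
    · rw [div_mul_div_comm, div_le_div_iff₀ (by positivity) hDen]
      nlinarith [mul_nonneg (mul_pos hc0 hR0).le (sub_nonneg.mpr hle2)]
    · rw [div_mul_div_comm, div_le_div_iff₀ hDen (by positivity)]
      nlinarith [mul_nonneg (mul_pos hc0 hR0).le (sub_nonneg.mpr hle1)]
  have hfnonneg : ∀ x ∈ Set.Ioo a b, 0 ≤ f x := by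
    intro x hx
    obtain ⟨hx0, h1, h2, hR⟩ := hxfacts x hx
    exact div_nonneg hc0.le (by positivity)
  have hInt : IntegrableOn f (Set.Ioo a b) := by
    apply Integrable.mono' (hgIntOo.const_mul (c / (sm * a))) hfm.aestronglyMeasurable
    rw [ae_restrict_iff' measurableSet_Ioo]
    exact ae_of_all _ fun x hx => by
      rw [Real.norm_eq_abs, abs_of_nonneg (hfnonneg x hx)]
      exact (hbounds x hx).2
  refine ⟨hInt, ?_, ?_⟩
  · have h1 : (∫ x in Set.Ioo a b, c / (sp * b) * g x) ≤ ∫ x in Set.Ioo a b, f x :=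
      setIntegral_mono_on (hgIntOo.const_mul _) hInt measurableSet_Ioo
        (fun x hx => (hbounds x hx).1)
    rwa [MeasureTheory.integral_const_mul, hgval] at h1
  · have h1 : (∫ x in Set.Ioo a b, f x) ≤ ∫ x in Set.Ioo a b, c / (sm * a) * g x :=
      setIntegral_mono_on hInt (hgIntOo.const_mul _) measurableSet_Ioo
        (fun x hx => (hbounds x hx).2)
    rwa [MeasureTheory.integral_const_mul, hgval] at h1

theorem period_integrable_and_tendsto :
    (∀ c ∈ Set.Ioo (0 : ℝ) 1,
      IntegrableOn
        (fun x : ℝ => c / (x * Real.sqrt (1 - x ^ 2)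
          * Real.sqrt (4 * x ^ 2 * (1 - x ^ 2) - c ^ 2)))
        (Set.Ioo (Real.sqrt ((1 - Real.sqrt (1 - c ^ 2)) / 2))
          (Real.sqrt ((1 + Real.sqrt (1 - c ^ 2)) / 2)))) ∧
    Filter.Tendsto
      (fun c : ℝ => 2 * ∫ x in Set.Ioo (Real.sqrt ((1 - Real.sqrt (1 - c ^ 2)) / 2))
          (Real.sqrt ((1 + Real.sqrt (1 - c ^ 2)) / 2)),
        c / (x * Real.sqrt (1 - x ^ 2) * Real.sqrt (4 * x ^ 2 * (1 - x ^ 2) - c ^ 2)))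
      (nhdsWithin 1 (Set.Iio 1)) (nhds (Real.sqrt 2 * Real.pi)) := by
  constructor
  · exact fun c hc => (key_est c hc.1 hc.2).1
  · have hmem : ∀ᶠ c in nhdsWithin (1 : ℝ) (Set.Iio 1), c ∈ Set.Ioo (0 : ℝ) 1 := by
      have h1 : ∀ᶠ c in nhdsWithin (1 : ℝ) (Set.Iio 1), c ∈ Set.Iio (1 : ℝ) :=
        eventually_mem_nhdsWithin
      have h2 : ∀ᶠ c in nhdsWithin (1 : ℝ) (Set.Iio 1), (0 : ℝ) < c :=
        eventually_nhdsWithin_of_eventually_nhds (eventually_gt_nhds (by norm_num))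
      filter_upwards [h1, h2] with c hc1 hc2
      exact ⟨hc2, hc1⟩
    have hsq : ContinuousAt (fun c : ℝ => Real.sqrt (1 - c ^ 2)) 1 :=
      (Real.continuous_sqrt.comp (continuous_const.sub (continuous_pow 2))).continuousAt
    have hval0 : Real.sqrt (1 - (1 : ℝ) ^ 2) = 0 := by norm_num
    have hhalf : Real.sqrt ((1 : ℝ) / 2) = (Real.sqrt 2)⁻¹ := by
      rw [one_div, Real.sqrt_inv]
    have hs2 : (0 : ℝ) < Real.sqrt 2 := Real.sqrt_pos.mpr two_pos
    have hs22 : Real.sqrt 2 * Real.sqrt 2 = 2 := Real.mul_self_sqrt (by norm_num)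
    -- limits of the two bounding functions
    have hlolim : Filter.Tendsto
        (fun c : ℝ => 2 * (c / (((1 + Real.sqrt (1 - c ^ 2)) / 2)
          * Real.sqrt ((1 + Real.sqrt (1 - c ^ 2)) / 2)) * (Real.pi / 4)))
        (nhdsWithin 1 (Set.Iio 1)) (nhds (Real.sqrt 2 * Real.pi)) := by
      have hs : ContinuousAt (fun c : ℝ => (1 + Real.sqrt (1 - c ^ 2)) / 2) 1 :=
        (continuousAt_const.add hsq).div_const 2
      have hden : ContinuousAt (fun c : ℝ =>
          ((1 + Real.sqrt (1 - c ^ 2)) / 2) * Real.sqrt ((1 + Real.sqrt (1 - c ^ 2)) / 2)) 1 :=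
        hs.mul (Real.continuous_sqrt.continuousAt.comp hs)
      have hne : ((1 + Real.sqrt (1 - (1 : ℝ) ^ 2)) / 2)
          * Real.sqrt ((1 + Real.sqrt (1 - (1 : ℝ) ^ 2)) / 2) ≠ 0 := by
        rw [hval0]; norm_num
      have hcont : ContinuousAt (fun c : ℝ => 2 * (c / (((1 + Real.sqrt (1 - c ^ 2)) / 2)
          * Real.sqrt ((1 + Real.sqrt (1 - c ^ 2)) / 2)) * (Real.pi / 4))) 1 :=
        continuousAt_const.mul ((continuousAt_id.div hden hne).mul continuousAt_const)
      have := hcont.tendsto.mono_left (nhdsWithin_le_nhds (s := Set.Iio 1))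
      convert this using 2
      rw [hval0]
      norm_num
      ring
    have hhilim : Filter.Tendsto
        (fun c : ℝ => 2 * (c / (((1 - Real.sqrt (1 - c ^ 2)) / 2)
          * Real.sqrt ((1 - Real.sqrt (1 - c ^ 2)) / 2)) * (Real.pi / 4)))
        (nhdsWithin 1 (Set.Iio 1)) (nhds (Real.sqrt 2 * Real.pi)) := by
      have hs : ContinuousAt (fun c : ℝ => (1 - Real.sqrt (1 - c ^ 2)) / 2) 1 :=
        (continuousAt_const.sub hsq).div_const 2
      have hden : ContinuousAt (fun c : ℝ =>
          ((1 - Real.sqrt (1 - c ^ 2)) / 2) * Real.sqrt ((1 - Real.sqrt (1 - c ^ 2)) / 2)) 1 :=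
        hs.mul (Real.continuous_sqrt.continuousAt.comp hs)
      have hne : ((1 - Real.sqrt (1 - (1 : ℝ) ^ 2)) / 2)
          * Real.sqrt ((1 - Real.sqrt (1 - (1 : ℝ) ^ 2)) / 2) ≠ 0 := by
        rw [hval0]; norm_num
      have hcont : ContinuousAt (fun c : ℝ => 2 * (c / (((1 - Real.sqrt (1 - c ^ 2)) / 2)
          * Real.sqrt ((1 - Real.sqrt (1 - c ^ 2)) / 2)) * (Real.pi / 4))) 1 :=
        continuousAt_const.mul ((continuousAt_id.div hden hne).mul continuousAt_const)
      have := hcont.tendsto.mono_left (nhdsWithin_le_nhds (s := Set.Iio 1))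
      convert this using 2
      rw [hval0]
      norm_num
      ring
    refine tendsto_of_tendsto_of_tendsto_of_le_of_le' hlolim hhilim ?_ ?_
    · filter_upwards [hmem] with c hc
      have := (key_est c hc.1 hc.2).2.1
      linarith
    · filter_upwards [hmem] with c hc
      have := (key_est c hc.1 hc.2).2.2
      linarith
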